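/- Let N, u ∈ ℕ with 2 ≤ u ≤ N. Then P( ∪_{k=1}^{N−u+1} { S_u^{(k)} = u−1 } ) ≤ 2N (pq)^{⌊u/2⌋}; i.e., the probability that some window of u consecutive trials among X_1,…,X_N is fully alternating is at most 2N(pq)^{⌊u/2⌋}. -/

import Mathlib

open MeasureTheory ProbabilityTheory Filter
open scoped Classical

/-- `switchCount X n m ω` is the number of switches `S_n^{(m)}` in the `n` trials
`X_m, …, X_{m+n-1}`. -/
def switchCount {Ω : Type*} (X : ℕ → Ω → ℕ) (n m : ℕ) (ω : Ω) : ℕ :=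
  ∑ i ∈ Finset.Icc (m + 1) (n + m - 1),
    ((1 - X (i - 1) ω) * X i ω + X (i - 1) ω * (1 - X i ω))

/-- `longestSwitch X N m ω` is `M_N^{(m)}`, the length of the longest run of consecutive
switches in the trials `X_m, …, X_{m+N-1}`. -/
noncomputable def longestSwitch {Ω : Type*} (X : ℕ → Ω → ℕ) (N m : ℕ) (ω : Ω) : ℕ :=
  ((Finset.Icc 1 N).filter fun n =>
      ∃ i ∈ Finset.Icc m (m + N - n + 1), switchCount X n i ω = n - 1).sup
    fun n => n - 1

private lemma prod_range_two_mul (P Q : ENNReal) (m : ℕ) :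
    (∏ j ∈ Finset.range (2 * m), (if Even j then P else Q)) = (P * Q) ^ m := by
  induction m with
  | zero => simp
  | succ m ih =>
    have h : 2 * (m + 1) = (2 * m) + 1 + 1 := by ring
    rw [h, Finset.prod_range_succ, Finset.prod_range_succ, ih]
    have h1 : Even (2 * m) := even_two_mul m
    have h2 : ¬ Even (2 * m + 1) := by simp [Nat.even_add_one, h1]
    rw [if_pos h1, if_neg h2]
    ring

theorem prob_exists_alternating_window_le
    {Ω : Type*} [MeasurableSpace Ω] (μ : Measure Ω) [IsProbabilityMeasure μ]
    (p q : ℝ) (hp0 : 0 < p) (hp1 : p < 1) (hq : q = 1 - p)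
    (X : ℕ → Ω → ℕ)
    (hmeas : ∀ i, Measurable (X i))
    (hval : ∀ i ω, X i ω ≤ 1)
    (hdist : ∀ i, μ {ω | X i ω = 1} = ENNReal.ofReal p)
    (hindep : iIndepFun X μ)
    (N u : ℕ) (hu : 2 ≤ u) (huN : u ≤ N) :
    (μ {ω | ∃ k : ℕ, 1 ≤ k ∧ k ≤ N - u + 1 ∧ switchCount X u k ω = u - 1}).toReal
      ≤ 2 * N * (p * q) ^ (u / 2) := by
  set m := u / 2 with hm
  have hm1 : 1 ≤ m := by omega
  have h2m : 2 * m ≤ u := by omega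
  have hq0 : 0 < q := by rw [hq]; linarith
  set r : ENNReal := (ENNReal.ofReal p * ENNReal.ofReal q) ^ m with hr
  -- measure of X i = 0
  have hμ0 : ∀ i, μ (X i ⁻¹' {0}) = ENNReal.ofReal q := by
    intro i
    have hset : X i ⁻¹' {0} = {ω | X i ω = 1}ᶜ := by
      ext ω
      have := hval i ω
      simp only [Set.mem_preimage, Set.mem_singleton_iff, Set.mem_compl_iff,
        Set.mem_setOf_eq]
      omega
    have hms : MeasurableSet {ω | X i ω = 1} := (hmeas i) (measurableSet_singleton 1)
    rw [hset, prob_compl_eq_one_sub hms, hdist i, hq,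
      ← ENNReal.ofReal_one, ← ENNReal.ofReal_sub _ hp0.le]
  have hμ1 : ∀ i, μ (X i ⁻¹' {1}) = ENNReal.ofReal p := fun i => hdist i
  -- the two alternating pattern sets
  have keyA : ∀ (k a : ℕ), a ≤ 1 →
      μ (⋂ i ∈ Finset.Icc k (k + 2 * m - 1),
        X i ⁻¹' {if Even (i - k) then a else 1 - a}) = r := by
    intro k a ha
    rw [hindep.meas_biInter (fun i _ =>
      ⟨{if Even (i - k) then a else 1 - a}, measurableSet_singleton _, rfl⟩)]
    have hIcc : Finset.Icc k (k + 2 * m - 1) = Finset.Ico k (k + 2 * m) := by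
      rw [← Finset.Ico_add_one_right_eq_Icc]
      congr 1
      omega
    rw [hIcc, Finset.prod_Ico_eq_prod_range]
    have hlen : k + 2 * m - k = 2 * m := by omega
    rw [hlen]
    interval_cases a
    · have : ∀ j ∈ Finset.range (2 * m),
          μ (X (k + j) ⁻¹' {if Even (k + j - k) then 0 else 1 - 0}) =
            (if Even j then ENNReal.ofReal q else ENNReal.ofReal p) := by
        intro j _
        rw [Nat.add_sub_cancel_left]
        split_ifs with h
        · exact hμ0 _
        · exact hμ1 _
      rw [Finset.prod_congr rfl this, prod_range_two_mul, hr, mul_comm]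
    · have : ∀ j ∈ Finset.range (2 * m),
          μ (X (k + j) ⁻¹' {if Even (k + j - k) then 1 else 1 - 1}) =
            (if Even j then ENNReal.ofReal p else ENNReal.ofReal q) := by
        intro j _
        rw [Nat.add_sub_cancel_left]
        split_ifs with h
        · exact hμ1 _
        · exact hμ0 _
      rw [Finset.prod_congr rfl this, prod_range_two_mul, hr]
  -- per-window bound
  have key : ∀ k : ℕ, μ {ω | switchCount X u k ω = u - 1} ≤ 2 * r := by
    intro k
    have hsub : {ω | switchCount X u k ω = u - 1} ⊆
        (⋂ i ∈ Finset.Icc k (k + 2 * m - 1),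
          X i ⁻¹' {if Even (i - k) then 1 else 1 - 1}) ∪
        (⋂ i ∈ Finset.Icc k (k + 2 * m - 1),
          X i ⁻¹' {if Even (i - k) then 0 else 1 - 0}) := by
      intro ω hω
      simp only [Set.mem_setOf_eq, switchCount] at hω
      -- every term equals 1
      have hterm : ∀ i ∈ Finset.Icc (k + 1) (u + k - 1),
          (1 - X (i - 1) ω) * X i ω + X (i - 1) ω * (1 - X i ω) = 1 := by
        have hcard : (Finset.Icc (k + 1) (u + k - 1)).card = u - 1 := by
          rw [Nat.card_Icc]; omega
        have hle : ∀ i ∈ Finset.Icc (k + 1) (u + k - 1),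
            (1 - X (i - 1) ω) * X i ω + X (i - 1) ω * (1 - X i ω) ≤ 1 := by
          intro i _
          have h1 := hval (i - 1) ω
          have h2 := hval i ω
          interval_cases (X (i - 1) ω) <;> interval_cases (X i ω) <;> simp
        have hsum1 : (∑ i ∈ Finset.Icc (k + 1) (u + k - 1),
            ((1 - X (i - 1) ω) * X i ω + X (i - 1) ω * (1 - X i ω))) =
            ∑ i ∈ Finset.Icc (k + 1) (u + k - 1), 1 := by
          rw [hω, Finset.sum_const, smul_eq_mul, mul_one, hcard]
        exact fun i hi => by
          have := (Finset.sum_eq_sum_iff_of_le hle).mp hsum1 i hi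
          simpa using this
      have hne : ∀ i ∈ Finset.Icc (k + 1) (u + k - 1), X (i - 1) ω ≠ X i ω := by
        intro i hi
        have h := hterm i hi
        have h1 := hval (i - 1) ω
        have h2 := hval i ω
        interval_cases (X (i - 1) ω) <;> interval_cases (X i ω) <;> simp_all
      -- alternation
      have halt : ∀ j, j < u →
          X (k + j) ω = if Even j then X k ω else 1 - X k ω := by
        intro j
        induction j with
        | zero => simp
        | succ j ih =>
          intro hj
          have hmem : k + j + 1 ∈ Finset.Icc (k + 1) (u + k - 1) := by
            rw [Finset.mem_Icc]; omega
          have hne' : X (k + j) ω ≠ X (k + j + 1) ω := by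
            have := hne (k + j + 1) hmem
            simpa using this
          have h1 := hval (k + j) ω
          have h2 := hval (k + j + 1) ω
          have h0 := hval k ω
          have ihj := ih (by omega)
          have hpar := Nat.even_add_one (n := j)
          show X (k + j + 1) ω = if Even (j + 1) then X k ω else 1 - X k ω
          rcases Nat.even_or_odd j with he | ho
          · rw [if_pos he] at ihj
            rw [if_neg (by simpa [hpar] using he)]
            omega
          · have hne2 : ¬ Even j := Nat.not_even_iff_odd.mpr ho
            rw [if_neg hne2] at ihj
            rw [if_pos (hpar.mpr hne2)]
            omega
      have h0 := hval k ω
      have hval01 : X k ω = 0 ∨ X k ω = 1 := by omega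
      rcases hval01 with h | h
      · right
        simp only [Set.mem_iInter, Set.mem_preimage, Set.mem_singleton_iff,
          Finset.mem_Icc]
        intro i hi
        have hik : k ≤ i := hi.1
        have hj : i - k < u := by omega
        have := halt (i - k) hj
        rw [Nat.add_sub_cancel' hik] at this
        rw [this, h]
      · left
        simp only [Set.mem_iInter, Set.mem_preimage, Set.mem_singleton_iff,
          Finset.mem_Icc]
        intro i hi
        have hik : k ≤ i := hi.1
        have hj : i - k < u := by omega
        have := halt (i - k) hj
        rw [Nat.add_sub_cancel' hik] at this
        rw [this, h]
    calc μ {ω | switchCount X u k ω = u - 1} ≤ _ := measure_mono hsub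
      _ ≤ _ + _ := measure_union_le _ _
      _ = r + r := by rw [keyA k 1 le_rfl, keyA k 0 (by norm_num)]
      _ = 2 * r := by ring
  -- union bound
  have hsubU : {ω | ∃ k : ℕ, 1 ≤ k ∧ k ≤ N - u + 1 ∧ switchCount X u k ω = u - 1} ⊆
      ⋃ k ∈ Finset.Icc 1 (N - u + 1), {ω | switchCount X u k ω = u - 1} := by
    intro ω ⟨k, h1, h2, h3⟩
    exact Set.mem_biUnion (Finset.mem_Icc.mpr ⟨h1, h2⟩) h3
  have hbound : μ {ω | ∃ k : ℕ, 1 ≤ k ∧ k ≤ N - u + 1 ∧ switchCount X u k ω = u - 1}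
      ≤ (N : ENNReal) * (2 * r) := by
    calc μ _ ≤ μ (⋃ k ∈ Finset.Icc 1 (N - u + 1), {ω | switchCount X u k ω = u - 1}) :=
            measure_mono hsubU
      _ ≤ ∑ k ∈ Finset.Icc 1 (N - u + 1), μ {ω | switchCount X u k ω = u - 1} :=
            measure_biUnion_finset_le _ _
      _ ≤ ∑ _k ∈ Finset.Icc 1 (N - u + 1), 2 * r := Finset.sum_le_sum fun k _ => key k
      _ = ((N - u + 1 : ℕ) : ENNReal) * (2 * r) := by
            rw [Finset.sum_const, Nat.card_Icc, nsmul_eq_mul, Nat.add_sub_cancel]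
      _ ≤ (N : ENNReal) * (2 * r) :=
            mul_le_mul_left (Nat.cast_le.mpr (by omega)) _
  have hrfin : (N : ENNReal) * (2 * r) ≠ ⊤ := by
    apply ENNReal.mul_ne_top (by simp)
    apply ENNReal.mul_ne_top (by simp)
    rw [hr]
    exact ENNReal.pow_ne_top (ENNReal.mul_ne_top ENNReal.ofReal_ne_top ENNReal.ofReal_ne_top)
  have hto := ENNReal.toReal_mono hrfin hbound
  refine le_trans hto (le_of_eq ?_)
  rw [ENNReal.toReal_mul, ENNReal.toReal_mul, hr, ENNReal.toReal_pow,
    ENNReal.toReal_mul, ENNReal.toReal_ofReal hp0.le, ENNReal.toReal_ofReal hq0.le]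
  simp
  ring
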